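/- Let G be a residually finite group and let A be a finite set. If X ⊆ A^G is a strongly irreducible subshift of finite type containing a periodic configuration, then X is surjunctive, i.e., every injective cellular automaton τ : X → X is surjective. -/

import Mathlib

/-- The shift action of a group `G` on configurations `x : G → A`:
`(g • x)(h) = x(g⁻¹h)`. -/
def shift {G A : Type*} [Group G] (g : G) (x : G → A) : G → A :=
  fun h => x (g⁻¹ * h)

/-- A subshift is a closed, shift-invariant subset of `A^G` (with the prodiscrete topology). -/
def IsSubshift {G A : Type*} [Group G] [TopologicalSpace A] (X : Set (G → A)) : Prop :=
  IsClosed X ∧ ∀ (g : G) (x : G → A), x ∈ X → shift g x ∈ X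

/-- A configuration is periodic if its orbit under the shift action is finite. -/
def IsPeriodicConfig {G A : Type*} [Group G] (x : G → A) : Prop :=
  (Set.range fun g : G => shift g x).Finite

/-- A subshift is of finite type if it is defined by a finite window `Ω` and a set of
allowed patterns `P ⊆ A^Ω`. -/
def IsOfFiniteType {G A : Type*} [Group G] (X : Set (G → A)) : Prop :=
  ∃ (Ω : Finset G) (P : Set ({g : G // g ∈ Ω} → A)),
    X = {x : G → A | ∀ g : G, (fun w : {g : G // g ∈ Ω} => shift g x w.1) ∈ P}

/-- A subshift is strongly irreducible if there is a finite `Δ ⊆ G` such that any two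
patterns of configurations of `X` with supports `Ω₁, Ω₂` satisfying `Ω₁Δ⁻¹ ∩ Ω₂ = ∅`
can be glued inside `X`. -/
def IsStronglyIrreducible {G A : Type*} [Group G] (X : Set (G → A)) : Prop :=
  ∃ Δ : Finset G, ∀ Ω₁ Ω₂ : Finset G,
    (∀ a ∈ Ω₁, ∀ d ∈ Δ, a * d⁻¹ ∉ Ω₂) →
    ∀ x₁ ∈ X, ∀ x₂ ∈ X, ∃ x ∈ X,
      (∀ w ∈ Ω₁, x w = x₁ w) ∧ (∀ w ∈ Ω₂, x w = x₂ w)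

/-- A group is residually finite if the intersection of its finite-index subgroups is
trivial, i.e. every nontrivial element avoids some finite-index subgroup. -/
def ResiduallyFinite (H : Type*) [Group H] : Prop :=
  ∀ h : H, h ≠ 1 → ∃ K : Subgroup H, K.FiniteIndex ∧ h ∉ K

section Aux

open scoped Pointwise

variable {G A : Type*} [Group G]

lemma shift_one (x : G → A) : shift (1 : G) x = x := by
  funext h; simp [shift]

lemma shift_mul (g h : G) (x : G → A) : shift (g * h) x = shift g (shift h x) := by
  funext k; simp [shift, mul_assoc]

/-- The stabilizer of a configuration under the shift action. -/
def shiftStab (p : G → A) : Subgroup G where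
  carrier := {g | shift g p = p}
  one_mem' := shift_one p
  mul_mem' := by
    intro a b ha hb
    simp only [Set.mem_setOf_eq] at *
    rw [shift_mul, hb, ha]
  inv_mem' := by
    intro a ha
    simp only [Set.mem_setOf_eq] at *
    conv_lhs => rw [← ha, ← shift_mul, inv_mul_cancel, shift_one]

lemma shift_eq_of_rel {p : G → A} {H : Subgroup G} (hH : ∀ h ∈ H, shift h p = p)
    {a b : G} (hab : a⁻¹ * b ∈ H) : shift a p = shift b p := by
  have : shift b p = shift a (shift (a⁻¹ * b) p) := by
    rw [← shift_mul, mul_inv_cancel_left]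
  rw [this, hH _ hab]

lemma finite_quotient_shiftStab {p : G → A} (hp : IsPeriodicConfig p) :
    Finite (G ⧸ shiftStab p) := by
  have hfin : Finite ↥(Set.range fun g : G => shift g p) := hp.to_subtype
  let f : G ⧸ shiftStab p → ↥(Set.range fun g : G => shift g p) := fun q =>
    Quotient.liftOn' q (fun g => ⟨shift g p, ⟨g, rfl⟩⟩)
      (fun a b hab => Subtype.ext
        (shift_eq_of_rel (fun h hh => hh) (QuotientGroup.leftRel_apply.mp hab)))
  have hfi : Function.Injective f := by
    intro q q'
    induction q using Quotient.inductionOn'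
    induction q' using Quotient.inductionOn'
    intro hqq
    apply Quotient.sound'
    rw [QuotientGroup.leftRel_apply]
    rename_i a b
    have : shift a p = shift b p := congrArg Subtype.val hqq
    show shift (a⁻¹ * b) p = p
    rw [shift_mul, ← this, ← shift_mul, inv_mul_cancel, shift_one]
  exact Finite.of_injective f hfi

lemma periodic_of_invariant {y : G → A} (H : Subgroup G) [Finite (G ⧸ H)]
    (hy : ∀ h ∈ H, shift h y = y) : IsPeriodicConfig y := by
  let f : G ⧸ H → (G → A) := fun q =>
    Quotient.liftOn' q (fun g => shift g y)
      (fun a b hab => shift_eq_of_rel hy (QuotientGroup.leftRel_apply.mp hab))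
  have : (Set.range fun g : G => shift g y) ⊆ Set.range f := by
    rintro _ ⟨g, rfl⟩
    exact ⟨Quotient.mk'' g, rfl⟩
  exact (Set.finite_range f).subset this

lemma fix_finite [Finite A] (H : Subgroup G) [Finite (G ⧸ H)] :
    {y : G → A | ∀ h ∈ H, shift h y = y}.Finite := by
  haveI : Finite (Quotient (QuotientGroup.rightRel H)) :=
    Finite.of_equiv _ (QuotientGroup.quotientRightRelEquivQuotientLeftRel H).symm
  set S := {y : G → A | ∀ h ∈ H, shift h y = y}
  let Φ : ↥S → (Quotient (QuotientGroup.rightRel H) → A) := fun y c => y.1 c.out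
  have hΦ : Function.Injective Φ := by
    intro y y' h
    have key : ∀ (y : ↥S) (g : G), y.1 g = Φ y (Quotient.mk'' g) := by
      intro y g
      show y.1 g = y.1 (Quotient.mk'' g : Quotient (QuotientGroup.rightRel H)).out
      set o := (Quotient.mk'' g : Quotient (QuotientGroup.rightRel H)).out with ho
      have hrel : g * o⁻¹ ∈ H := by
        have : Quotient.mk'' o = (Quotient.mk'' g : Quotient (QuotientGroup.rightRel H)) :=
          Quotient.out_eq' _
        exact QuotientGroup.rightRel_apply.mp (Quotient.exact' this)
      have := congrFun (y.2 _ (H.inv_mem hrel)) o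
      simpa [shift, mul_assoc] using this
    have : ∀ g, y.1 g = y'.1 g := by
      intro g
      rw [key y g, key y' g, h]
    exact Subtype.ext (funext this)
  haveI : Finite ↥S := Finite.of_injective Φ hΦ
  exact S.toFinite

/-- Every periodic configuration of `X` is in the image of an injective,
equivariant self-map of `X`. -/
lemma periodic_mem_image {A : Type*} [Finite A]
    (X : Set (G → A)) (τ : (G → A) → (G → A)) (hmaps : Set.MapsTo τ X X)
    (hequiv : ∀ g : G, ∀ x ∈ X, τ (shift g x) = shift g (τ x))
    (hinj : Set.InjOn τ X) {q : G → A} (hq : q ∈ X) (hqper : IsPeriodicConfig q) :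
    q ∈ τ '' X := by
  haveI : Finite (G ⧸ shiftStab q) := finite_quotient_shiftStab hqper
  set Fx := {y : G → A | y ∈ X ∧ ∀ h ∈ shiftStab q, shift h y = y} with hFx
  have hFfin : Fx.Finite := (fix_finite (shiftStab q)).subset (fun y hy => hy.2)
  haveI : Finite ↥Fx := hFfin.to_subtype
  let σ : ↥Fx → ↥Fx := fun y => ⟨τ y.1, hmaps y.2.1, fun h hh => by
    rw [← hequiv h y.1 y.2.1, y.2.2 h hh]⟩
  have hσinj : Function.Injective σ := by
    intro a b hab
    exact Subtype.ext (hinj a.2.1 b.2.1 (congrArg Subtype.val hab))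
  have hσsurj := Finite.injective_iff_surjective.mp hσinj
  obtain ⟨y, hy⟩ := hσsurj ⟨q, hq, fun h hh => hh⟩
  exact ⟨y.1, y.2.1, congrArg Subtype.val hy⟩

variable [Finite A] [TopologicalSpace A] [DiscreteTopology A]

/-- Gluing via strong irreducibility and compactness: a configuration agreeing with `x`
on the finite set `E` and with `p` outside of `EΔ⁻¹`. -/
lemma glue_config {X : Set (G → A)} (hXc : IsClosed X) (Δ : Finset G)
    (hsi : ∀ Ω₁ Ω₂ : Finset G,
      (∀ a ∈ Ω₁, ∀ d ∈ Δ, a * d⁻¹ ∉ Ω₂) →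
      ∀ x₁ ∈ X, ∀ x₂ ∈ X, ∃ x ∈ X,
        (∀ w ∈ Ω₁, x w = x₁ w) ∧ (∀ w ∈ Ω₂, x w = x₂ w))
    (E : Finset G) {x p : G → A} (hx : x ∈ X) (hp : p ∈ X) :
    ∃ z ∈ X, (∀ w ∈ E, z w = x w) ∧
      ∀ c : G, (∀ a ∈ E, ∀ d ∈ Δ, c ≠ a * d⁻¹) → z c = p c := by
  classical
  set C : Set G := {c : G | ∀ a ∈ E, ∀ d ∈ Δ, c ≠ a * d⁻¹} with hC
  set s : Set (G → A) := X ∩ ⋂ w ∈ E, {z : G → A | z w = x w} with hs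
  have hscl : IsClosed s := by
    apply hXc.inter
    apply isClosed_biInter
    intro w _
    exact isClosed_eq (continuous_apply w) continuous_const
  have hscpt : IsCompact s := hscl.isCompact
  set t : ↥C → Set (G → A) := fun c => {z : G → A | z c.1 = p c.1} with ht
  have htc : ∀ c, IsClosed (t c) := fun c =>
    isClosed_eq (continuous_apply c.1) continuous_const
  have hst : ∀ u : Finset ↥C, (s ∩ ⋂ i ∈ u, t i).Nonempty := by
    intro u
    obtain ⟨z, hzX, hz1, hz2⟩ := hsi E (u.image (fun i => i.1))
      (by
        intro a ha d hd hmem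
        obtain ⟨i, _, hi⟩ := Finset.mem_image.mp hmem
        exact i.2 a ha d hd hi) x hx p hp
    refine ⟨z, ⟨hzX, ?_⟩, ?_⟩
    · exact Set.mem_biInter fun w hw => hz1 w hw
    · refine Set.mem_biInter fun i hi => ?_
      exact hz2 i.1 (Finset.mem_image.mpr ⟨i, hi, rfl⟩)
  obtain ⟨z, ⟨hzX, hzE⟩, hzC⟩ := hscpt.inter_iInter_nonempty t htc hst
  refine ⟨z, hzX, fun w hw => ?_, fun c hc => ?_⟩
  · exact Set.mem_iInter₂.mp hzE w hw
  · exact Set.mem_iInter.mp hzC ⟨c, hc⟩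

/-- Density of periodic configurations in a strongly irreducible SFT containing a
periodic configuration, over a residually finite group. -/
lemma exists_periodic_close (hG : ResiduallyFinite G) {X : Set (G → A)}
    (hXc : IsClosed X) (hft : IsOfFiniteType X) (hsi : IsStronglyIrreducible X)
    {p : G → A} (hp : p ∈ X) (hpper : IsPeriodicConfig p)
    {x : G → A} (hx : x ∈ X) (E : Finset G) :
    ∃ y ∈ X, IsPeriodicConfig y ∧ ∀ w ∈ E, y w = x w := by
  classical
  obtain ⟨Ω₀, P, hXeq⟩ := hft
  obtain ⟨Δ, hΔ⟩ := hsi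
  -- the finite sets controlling the construction
  set D₀ : Finset G := E ∪ E * Δ⁻¹ with hD₀
  set D : Finset G := D₀ ∪ D₀ * (Ω₀⁻¹ * Ω₀) with hD
  set F : Finset G := D * D⁻¹ with hF
  have hED : ∀ w ∈ E, w ∈ D := fun w hw =>
    Finset.mem_union_left _ (Finset.mem_union_left _ hw)
  have hEΔD₀ : ∀ a ∈ E, ∀ d ∈ Δ, a * d⁻¹ ∈ D₀ := fun a ha d hd =>
    Finset.mem_union_right _ (Finset.mul_mem_mul ha (Finset.inv_mem_inv hd))
  -- a finite-index subgroup avoiding F \ {1} and stabilizing p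
  set K : G → Subgroup G := fun f =>
    if hf : f = 1 then ⊤ else (hG f hf).choose with hK
  have hKfi : ∀ f, (K f).FiniteIndex := by
    intro f
    simp only [hK]
    split
    · infer_instance
    · rename_i hf
      exact (hG f hf).choose_spec.1
  have hKavoid : ∀ f, f ≠ 1 → f ∉ K f := by
    intro f hf
    simp only [hK, dif_neg hf]
    exact (hG f hf).choose_spec.2
  have hFinf : ∀ s : Finset G, (s.inf K).FiniteIndex := by
    intro s
    induction s using Finset.induction_on with
    | empty => rw [Finset.inf_empty]; infer_instance
    | @insert a s ha ih =>
      rw [Finset.inf_insert]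
      haveI := hKfi a
      haveI := ih
      infer_instance
  haveI : Finite (G ⧸ shiftStab p) := finite_quotient_shiftStab hpper
  haveI : (shiftStab p).FiniteIndex := (shiftStab p).finiteIndex_of_finite_quotient
  set H : Subgroup G := shiftStab p ⊓ F.inf K with hH
  haveI : (F.inf K).FiniteIndex := hFinf F
  haveI hHfi : H.FiniteIndex := by rw [hH]; infer_instance
  haveI : Finite (G ⧸ H) := H.finite_quotient_of_finiteIndex
  have hHp : ∀ h ∈ H, shift h p = p := fun h hh => hh.1
  have hH1 : ∀ h ∈ H, h ∈ F → h = 1 := by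
    intro h hh hf
    by_contra hne
    exact hKavoid h hne (SetLike.le_def.mp (Finset.inf_le hf) hh.2)
  have huniq : ∀ (t h h' : G), h ∈ H → h' ∈ H →
      h⁻¹ * t ∈ D → h'⁻¹ * t ∈ D → h = h' := by
    intro t h h' hh hh' hd hd'
    have hmem : h⁻¹ * h' ∈ F := by
      have : h⁻¹ * h' = (h⁻¹ * t) * (h'⁻¹ * t)⁻¹ := by group
      rw [this, hF]
      exact Finset.mul_mem_mul hd (Finset.inv_mem_inv hd')
    have := hH1 _ (H.mul_mem (H.inv_mem hh) hh') hmem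
    have := inv_mul_eq_one.mp this
    exact this
  -- glue x (on E) with p (far away)
  obtain ⟨z, hzX, hzx, hzp⟩ := glue_config hXc Δ hΔ E hx hp
  -- the periodic approximation
  set Y : G → A := fun g =>
    if hc : ∃ h, h ∈ H ∧ h⁻¹ * g ∈ D then z ((Classical.choose hc)⁻¹ * g) else p g
    with hYdef
  have hyspec : ∀ (g h : G), h ∈ H → h⁻¹ * g ∈ D → Y g = z (h⁻¹ * g) := by
    intro g h hh hd
    have hc : ∃ h', h' ∈ H ∧ h'⁻¹ * g ∈ D := ⟨h, hh, hd⟩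
    simp only [hYdef]
    rw [dif_pos hc]
    obtain ⟨hh', hd'⟩ := Classical.choose_spec hc
    rw [huniq g _ h hh' hh hd' hd]
  have hyneg : ∀ g : G, (∀ h ∈ H, h⁻¹ * g ∉ D) → Y g = p g := by
    intro g hg
    simp only [hYdef]
    rw [dif_neg]
    rintro ⟨h, hh, hd⟩
    exact hg h hh hd
  have hp2 : ∀ h ∈ H, ∀ k : G, p (h⁻¹ * k) = p k := by
    intro h hh k
    exact congrFun (hHp h hh) k
  -- Y is H-invariant
  have hyinv : ∀ h ∈ H, shift h Y = Y := by
    intro h hh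
    funext g
    show Y (h⁻¹ * g) = Y g
    by_cases hc : ∃ h', h' ∈ H ∧ h'⁻¹ * (h⁻¹ * g) ∈ D
    · obtain ⟨h', hh', hd⟩ := hc
      rw [hyspec _ _ hh' hd]
      have hrw : (h * h')⁻¹ * g = h'⁻¹ * (h⁻¹ * g) := by group
      rw [hyspec g (h * h') (H.mul_mem hh hh') (by rw [hrw]; exact hd), hrw]
    · push_neg at hc
      rw [hyneg _ hc]
      have hg : ∀ h'' ∈ H, h''⁻¹ * g ∉ D := by
        intro h'' hh'' hd
        apply hc (h⁻¹ * h'') (H.mul_mem (H.inv_mem hh) hh'')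
        have : (h⁻¹ * h'')⁻¹ * (h⁻¹ * g) = h''⁻¹ * g := by group
        rw [this]; exact hd
      rw [hyneg _ hg]
      exact hp2 h hh g
  -- Y agrees with x on E
  have hyE : ∀ w ∈ E, Y w = x w := by
    intro w hw
    have h1D : (1 : G)⁻¹ * w ∈ D := by simpa using hED w hw
    rw [hyspec w 1 H.one_mem h1D]
    simpa using hzx w hw
  -- Y belongs to X
  have hzP : ∀ g : G, (fun w : {g : G // g ∈ Ω₀} => shift g z w.1) ∈ P := by
    rw [hXeq] at hzX; exact hzX
  have hpP : ∀ g : G, (fun w : {g : G // g ∈ Ω₀} => shift g p w.1) ∈ P := by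
    rw [hXeq] at hp; exact hp
  have hyX : Y ∈ X := by
    rw [hXeq]
    intro g
    by_cases hA : ∃ h, h ∈ H ∧ ∃ w₀ ∈ Ω₀, h⁻¹ * (g⁻¹ * w₀) ∈ D
    · obtain ⟨h, hh, w₀, hw₀, hmem⟩ := hA
      have key : ∀ w ∈ Ω₀, Y (g⁻¹ * w) = z (h⁻¹ * (g⁻¹ * w)) := by
        intro w hw
        by_cases h1 : h⁻¹ * (g⁻¹ * w) ∈ D
        · exact hyspec _ _ hh h1
        · have hnotD0 : ∀ a ∈ E, ∀ d ∈ Δ, h⁻¹ * (g⁻¹ * w) ≠ a * d⁻¹ := by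
            intro a ha d hd heq
            apply h1
            rw [heq]
            exact Finset.mem_union_left _ (hEΔD₀ a ha d hd)
          rw [hzp _ hnotD0, hp2 h hh]
          by_cases h2 : ∃ h', h' ∈ H ∧ h'⁻¹ * (g⁻¹ * w) ∈ D
          · obtain ⟨h', hh', hmem'⟩ := h2
            rw [hyspec _ _ hh' hmem']
            have hne : ∀ a ∈ E, ∀ d ∈ Δ, h'⁻¹ * (g⁻¹ * w) ≠ a * d⁻¹ := by
              intro a ha d hd heq
              have hD0 : h'⁻¹ * (g⁻¹ * w) ∈ D₀ := by
                rw [heq]; exact hEΔD₀ a ha d hd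
              have hD' : h'⁻¹ * (g⁻¹ * w₀) ∈ D := by
                have hrw : h'⁻¹ * (g⁻¹ * w₀) = (h'⁻¹ * (g⁻¹ * w)) * (w⁻¹ * w₀) := by
                  group
                rw [hrw, hD]
                exact Finset.mem_union_right _
                  (Finset.mul_mem_mul hD0
                    (Finset.mul_mem_mul (Finset.inv_mem_inv hw) hw₀))
              have heqh : h' = h := huniq (g⁻¹ * w₀) h' h hh' hh hD' hmem
              rw [heqh] at hmem'
              exact h1 hmem'
            rw [hzp _ hne, hp2 h' hh']
          · push_neg at h2
            exact hyneg _ h2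
      have hfun : (fun w : {g : G // g ∈ Ω₀} => shift g Y w.1)
          = (fun w : {g : G // g ∈ Ω₀} => shift (g * h) z w.1) := by
        funext w
        show Y (g⁻¹ * w.1) = z ((g * h)⁻¹ * w.1)
        rw [key w.1 w.2]
        congr 1
        group
      rw [hfun]
      exact hzP (g * h)
    · push_neg at hA
      have hfun : (fun w : {g : G // g ∈ Ω₀} => shift g Y w.1)
          = (fun w : {g : G // g ∈ Ω₀} => shift g p w.1) := by
        funext w
        show Y (g⁻¹ * w.1) = p (g⁻¹ * w.1)
        exact hyneg _ (fun h' hh' => hA h' hh' w.1 w.2)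
      rw [hfun]
      exact hpP g
  exact ⟨Y, hyX, periodic_of_invariant H hyinv, hyE⟩

end Aux

/-- If `G` is residually finite, `A` a finite set and `X ⊆ A^G` a strongly irreducible
subshift of finite type containing a periodic configuration, then `X` is surjunctive:
every injective cellular automaton (continuous `G`-equivariant self-map) `τ : X → X`
is surjective. -/
theorem strongly_irreducible_sft_surjunctive
    {G A : Type*} [Group G] [Finite A] [TopologicalSpace A] [DiscreteTopology A]
    (hG : ResiduallyFinite G) (X : Set (G → A))
    (hX : IsSubshift X) (hft : IsOfFiniteType X) (hsi : IsStronglyIrreducible X)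
    (hper : ∃ x ∈ X, IsPeriodicConfig x)
    (τ : (G → A) → (G → A)) (hmaps : Set.MapsTo τ X X) (hcont : ContinuousOn τ X)
    (hequiv : ∀ g : G, ∀ x ∈ X, τ (shift g x) = shift g (τ x))
    (hinj : Set.InjOn τ X) :
    X ⊆ τ '' X := by
  intro x hx
  obtain ⟨p, hp, hpper⟩ := hper
  have hXcl : IsClosed X := hX.1
  have hXcpt : IsCompact X := hXcl.isCompact
  have himg : IsClosed (τ '' X) := (hXcpt.image_of_continuousOn hcont).isClosed
  rw [← himg.closure_eq]
  rw [mem_closure_iff]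
  intro U hU hxU
  obtain ⟨I, u, hIu, hsub⟩ := isOpen_pi_iff.mp hU x hxU
  obtain ⟨y, hyX, hyper, hyE⟩ := exists_periodic_close hG hXcl hft hsi hp hpper hx I
  refine ⟨y, hsub ?_, periodic_mem_image X τ hmaps hequiv hinj hyX hyper⟩
  intro i hi
  rw [hyE i hi]
  exact (hIu i hi).2
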